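/- Every interval of a k-Eulerian poset is k-Eulerian, and a k-Eulerian poset P of rank n+1 satisfies ∑_{i=1}^{n} (−1)^{i−1} f_i(P) = k(1 − (−1)^n), where f_i(P) is the number of elements of P of rank i. -/
import Mathlib


open scoped Classical

attribute [local instance] Fintype.ofFinite

/-- A rank function making a bounded poset graded of rank `n+1`. -/
def IsGraded (P : Type) [PartialOrder P] [BoundedOrder P] (ρ : P → ℕ) (n : ℕ) : Prop :=
  ρ ⊥ = 0 ∧ ρ ⊤ = n + 1 ∧ ∀ x y : P, x ⋖ y → ρ y = ρ x + 1

/-- A poset is `r`-thick if every nonempty open interval has at least `r` elements. -/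
def RThick (P : Type) [PartialOrder P] [Fintype P] (r : ℕ) : Prop :=
  ∀ x y : P, x < y → (∃ z, x < z ∧ z < y) →
    r ≤ (Finset.univ.filter fun z => x < z ∧ z < y).card

/-- The flag number `f_S(P)`: the number of chains of `P` whose set of ranks is `S`. -/
noncomputable def flagNum {P : Type} [PartialOrder P] [Fintype P] (ρ : P → ℕ)
    (S : Finset ℕ) : ℕ :=
  (Finset.univ.filter fun c : Finset P =>
    IsChain (· ≤ ·) (c : Set P) ∧ c.image ρ = S ∧ c.card = S.card).card

/-- The flag number `f_S([x,y])` of the interval `[x,y]`, with ranks relative to `x`. -/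
noncomputable def flagNumI {P : Type} [PartialOrder P] [Fintype P] (ρ : P → ℕ)
    (x y : P) (S : Finset ℕ) : ℕ :=
  (Finset.univ.filter fun c : Finset P =>
    IsChain (· ≤ ·) (c : Set P) ∧ (∀ z ∈ c, x < z ∧ z < y) ∧
      c.image (fun z => ρ z - ρ x) = S ∧ c.card = S.card).card

/-- The `k`-Möbius function `μ_k([x,y])`. -/
noncomputable def muk {P : Type} [PartialOrder P] [Fintype P] (k : ℝ) (x : P) (y : P) : ℝ :=
  if x = y then 1
  else -1 - (1/k) * ∑ z ∈ (Finset.univ.filter fun z => x < z ∧ z < y).attach,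
    muk k x z.val
termination_by (Finset.univ.filter fun w => w < y).card
decreasing_by
  have hz : (z : P) < y := (Finset.mem_filter.mp z.2).2.2
  apply Finset.card_lt_card
  rw [Finset.ssubset_iff_of_subset]
  · exact ⟨z, Finset.mem_filter.mpr ⟨Finset.mem_univ _, hz⟩,
      fun hc => absurd (Finset.mem_filter.mp hc).2 (lt_irrefl _)⟩
  · intro w hw
    exact Finset.mem_filter.mpr ⟨Finset.mem_univ _, (Finset.mem_filter.mp hw).2.trans hz⟩

/-- The ordinary Möbius function of a finite poset. -/
noncomputable def mobius {P : Type} [PartialOrder P] [Fintype P] (x : P) (y : P) : ℤ :=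
  if x = y then 1
  else -∑ z ∈ (Finset.univ.filter fun z => x ≤ z ∧ z < y).attach, mobius x z.val
termination_by (Finset.univ.filter fun w => w < y).card
decreasing_by
  have hz : (z : P) < y := (Finset.mem_filter.mp z.2).2.2
  apply Finset.card_lt_card
  rw [Finset.ssubset_iff_of_subset]
  · exact ⟨z, Finset.mem_filter.mpr ⟨Finset.mem_univ _, hz⟩,
      fun hc => absurd (Finset.mem_filter.mp hc).2 (lt_irrefl _)⟩
  · intro w hw
    exact Finset.mem_filter.mpr ⟨Finset.mem_univ _, (Finset.mem_filter.mp hw).2.trans hz⟩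

/-- A graded poset is `k`-Eulerian when `μ_k([x,y]) = (-1)^{ρ(y)-ρ(x)}` on every interval. -/
def IsKEulerian (P : Type) [PartialOrder P] [Fintype P] (ρ : P → ℕ) (k : ℝ) : Prop :=
  ∀ x y : P, x ≤ y → muk k x y = (-1 : ℝ) ^ (ρ y - ρ x)

/-- The flag `L^k` vector of a poset of rank `n+1`. -/
noncomputable def Lk {P : Type} [PartialOrder P] [Fintype P] (k : ℝ) (n : ℕ) (ρ : P → ℕ)
    (S : Finset ℕ) : ℝ :=
  (-1 : ℝ) ^ (n - S.card) *
    ∑ T ∈ (Finset.Icc 1 n).powerset.filter (fun T => Finset.Icc 1 n \ S ⊆ T),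
      (-(1/(2*k))) ^ T.card * (flagNum ρ T : ℝ)

/-- The flag `L^k` vector of an interval `[x,y]` of rank `n+1`. -/
noncomputable def LkI {P : Type} [PartialOrder P] [Fintype P] (k : ℝ) (n : ℕ) (ρ : P → ℕ)
    (x y : P) (S : Finset ℕ) : ℝ :=
  (-1 : ℝ) ^ (n - S.card) *
    ∑ T ∈ (Finset.Icc 1 n).powerset.filter (fun T => Finset.Icc 1 n \ S ⊆ T),
      (-(1/(2*k))) ^ T.card * (flagNumI ρ x y T : ℝ)

/-- A set is even if it is a disjoint union of intervals of even cardinality. -/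
def IsEvenSet (S : Finset ℕ) : Prop :=
  ∃ J : Finset (ℕ × ℕ),
    S = J.biUnion (fun p => Finset.Icc p.1 p.2) ∧
    (∀ p ∈ J, p.1 ≤ p.2 ∧ Even (p.2 + 1 - p.1)) ∧
    (∀ p ∈ J, ∀ q ∈ J, p ≠ q → Disjoint (Finset.Icc p.1 p.2) (Finset.Icc q.1 q.2))

/-- The horizontal `r`-fold duplication `D^r P`. -/
inductive Dup (P : Type) [PartialOrder P] [BoundedOrder P] (r : ℕ) : Type where
  | bot : Dup P r
  | top : Dup P r
  | mid : {x : P // x ≠ ⊥ ∧ x ≠ ⊤} → Fin r → Dup P r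

namespace Dup

variable {P : Type} [PartialOrder P] [BoundedOrder P] {r : ℕ}

def le : Dup P r → Dup P r → Prop
  | .bot, _ => True
  | .mid _ _, .bot => False
  | .mid x i, .mid y j => (x = y ∧ i = j) ∨ (x : P) < (y : P)
  | .mid _ _, .top => True
  | .top, .top => True
  | .top, _ => False

instance : PartialOrder (Dup P r) where
  le := Dup.le
  le_refl a := by cases a with
    | bot => trivial
    | top => trivial
    | mid x i => exact Or.inl ⟨rfl, rfl⟩
  le_trans a b c hab hbc := by
    cases a with
    | bot => trivial
    | top =>
      cases b with
      | top =>
        cases c with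
        | top => trivial
        | bot => exact hbc.elim
        | mid _ _ => exact hbc.elim
      | bot => exact hab.elim
      | mid _ _ => exact hab.elim
    | mid x i =>
      cases b with
      | bot => exact hab.elim
      | top =>
        cases c with
        | top => trivial
        | bot => exact hbc.elim
        | mid _ _ => exact hbc.elim
      | mid y j =>
        cases c with
        | bot => exact hbc.elim
        | top => trivial
        | mid z l =>
          rcases hab with ⟨rfl, rfl⟩ | h1
          · exact hbc
          · rcases hbc with ⟨rfl, rfl⟩ | h2
            · exact Or.inr h1
            · exact Or.inr (h1.trans h2)
  le_antisymm a b hab hba := by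
    cases a with
    | bot =>
      cases b with
      | bot => rfl
      | top => exact hba.elim
      | mid _ _ => exact hba.elim
    | top =>
      cases b with
      | top => rfl
      | bot => exact hab.elim
      | mid _ _ => exact hab.elim
    | mid x i =>
      cases b with
      | bot => exact hab.elim
      | top => exact hba.elim
      | mid y j =>
        rcases hab with ⟨rfl, rfl⟩ | h1
        · rfl
        · rcases hba with ⟨rfl, rfl⟩ | h2
          · exact absurd h1 (lt_irrefl _)
          · exact absurd (h1.trans h2) (lt_irrefl _)

instance : BoundedOrder (Dup P r) where
  top := .top
  bot := .bot
  le_top a := by cases a <;> trivial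
  bot_le a := trivial

instance [Finite P] : Finite (Dup P r) :=
  Finite.of_injective
    (fun a : Dup P r =>
      (match a with
        | .bot => none
        | .top => some none
        | .mid x i => some (some (x, i)) :
        Option (Option ({x : P // x ≠ ⊥ ∧ x ≠ ⊤} × Fin r))))
    (by intro a b h; cases a <;> cases b <;> simp_all)

/-- The rank function of `D^r P`, where `P` has rank `n+1`. -/
def rank (ρ : P → ℕ) (n : ℕ) : Dup P r → ℕ
  | .bot => 0
  | .top => n + 1
  | .mid x _ => ρ x.val

/-- `a ∈ D^r P` is a copy of `x ∈ P`. -/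
def IsCopy (a : Dup P r) (x : P) : Prop :=
  (x = ⊥ ∧ a = .bot) ∨ (x = ⊤ ∧ a = .top) ∨ ∃ h i, a = .mid ⟨x, h⟩ i

end Dup


section AuxLemmas

lemma graded_strictMono' {P : Type} [PartialOrder P] [Finite P] {ρ : P → ℕ}
    (hcov : ∀ x y : P, x ⋖ y → ρ y = ρ x + 1) : StrictMono ρ := by
  have H : ∀ x : P, ∀ y, x < y → ρ x < ρ y := by
    intro x
    refine (wellFounded_gt (α := P)).induction
      (C := fun x => ∀ y, x < y → ρ x < ρ y) x ?_
    intro x IH y hxy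
    obtain ⟨z, hz, hzy⟩ := hxy.exists_covby_le
    have h1 : ρ z = ρ x + 1 := hcov x z hz
    rcases hzy.lt_or_eq with h | h
    · have := IH z hz.lt y h
      omega
    · subst h
      omega
  exact fun x y h => H x y h

lemma muk_icc {P : Type} [PartialOrder P] [Finite P] (k : ℝ) (a b : P)
    (x y : Set.Icc a b) : muk k x y = muk k x.val y.val := by
  refine (wellFounded_lt (α := Set.Icc a b)).induction
    (C := fun y => muk k x y = muk k x.val y.val) y ?_
  intro y IH
  by_cases h : x = y
  · subst h
    rw [muk, muk]
    simp
  · have h' : (x : P) ≠ (y : P) := fun hv => h (Subtype.ext hv)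
    conv_lhs => rw [muk]
    conv_rhs => rw [muk]
    rw [if_neg h, if_neg h']
    have hsum :
        (∑ z ∈ (Finset.univ.filter fun z : Set.Icc a b => x < z ∧ z < y).attach,
          muk k x z.val)
        = ∑ z ∈ (Finset.univ.filter fun z : P => (x : P) < z ∧ z < (y : P)).attach,
          muk k x.val z.val := by
      rw [Finset.sum_attach _ (fun z => muk k x z),
        Finset.sum_attach _ (fun z => muk k x.val z)]
      refine Finset.sum_bij (fun z _ => (z : P)) ?_ ?_ ?_ ?_
      · intro z hz
        simp only [Finset.mem_filter, Finset.mem_univ, true_and] at hz ⊢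
        exact ⟨Subtype.coe_lt_coe.mpr hz.1, Subtype.coe_lt_coe.mpr hz.2⟩
      · intro z1 h1 z2 h2 h
        exact Subtype.ext h
      · intro w hw
        simp only [Finset.mem_filter, Finset.mem_univ, true_and] at hw
        refine ⟨⟨w, ⟨x.2.1.trans hw.1.le, hw.2.le.trans y.2.2⟩⟩, ?_, rfl⟩
        simp only [Finset.mem_filter, Finset.mem_univ, true_and]
        exact ⟨Subtype.coe_lt_coe.mp hw.1, Subtype.coe_lt_coe.mp hw.2⟩
      · intro z hz
        simp only [Finset.mem_filter, Finset.mem_univ, true_and] at hz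
        exact IH z hz.2
    rw [hsum]

lemma flagNum_singleton {P : Type} [PartialOrder P] [Finite P] (ρ : P → ℕ) (i : ℕ) :
    flagNum ρ {i} = (Finset.univ.filter fun z : P => ρ z = i).card := by
  unfold flagNum
  symm
  refine Finset.card_bij (fun z _ => ({z} : Finset P)) ?_ ?_ ?_
  · intro z hz
    simp only [Finset.mem_filter, Finset.mem_univ, true_and] at hz ⊢
    refine ⟨?_, ?_, ?_⟩
    · simp [Set.Subsingleton.isChain, Set.subsingleton_singleton]
    · simp [hz]
    · simp
  · intro z1 h1 z2 h2 h
    exact Finset.singleton_injective h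
  · intro c hc
    simp only [Finset.mem_filter, Finset.mem_univ, true_and] at hc
    obtain ⟨hchain, himg, hcard⟩ := hc
    rw [Finset.card_singleton] at hcard
    obtain ⟨z, rfl⟩ := Finset.card_eq_one.mp hcard
    refine ⟨z, ?_, rfl⟩
    simp only [Finset.mem_filter, Finset.mem_univ, true_and]
    have : ({ρ z} : Finset ℕ) = {i} := by simpa using himg
    exact Finset.singleton_injective this

end AuxLemmas

/-- intervals of a `k`-Eulerian poset are `k`-Eulerian, and the
alternating sum of the rank numbers is `k(1-(-1)^n)`. -/
theorem isKEulerian_intervals_and_euler {P : Type} [PartialOrder P] [BoundedOrder P] [Finite P]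
    (n : ℕ) (ρ : P → ℕ) (k : ℝ) (hk : 0 < k) (hP : IsGraded P ρ n)
    (hE : IsKEulerian P ρ k) :
    (∀ a b : P, a ≤ b →
        IsKEulerian (Set.Icc a b) (fun z => ρ z.val - ρ a) k) ∧
    ∑ i ∈ Finset.Icc 1 n, (-1 : ℝ) ^ (i - 1) * (flagNum ρ {i} : ℝ)
      = k * (1 - (-1 : ℝ) ^ n) := by
  have hcov := hP.2.2
  have hmono : StrictMono ρ := graded_strictMono' hcov
  have hbt : (⊥ : P) ≠ ⊤ := by
    intro h
    have h1 := hP.1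
    have h2 := hP.2.1
    rw [h, h2] at h1
    omega
  constructor
  · intro a b hab x y hxy
    rw [muk_icc]
    have hxy' : (x : P) ≤ (y : P) := Subtype.coe_le_coe.mpr hxy
    rw [hE x.val y.val hxy']
    have h1 : ρ a ≤ ρ x.val := hmono.monotone x.2.1
    have h2 : ρ x.val ≤ ρ y.val := hmono.monotone hxy'
    have heq : (fun z : Set.Icc a b => ρ z.val - ρ a) y
        - (fun z : Set.Icc a b => ρ z.val - ρ a) x = ρ y.val - ρ x.val := by
      simp only
      omega
    rw [heq]
  · have hmu : muk k (⊥ : P) (⊤ : P) = (-1 : ℝ) ^ (n + 1) := by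
      rw [hE ⊥ ⊤ bot_le, hP.1, hP.2.1, Nat.sub_zero]
    rw [muk, if_neg hbt] at hmu
    rw [Finset.sum_attach _ (fun z => muk k (⊥ : P) z)] at hmu
    set F := (Finset.univ.filter fun z : P => (⊥ : P) < z ∧ z < ⊤) with hF
    have hS : ∑ z ∈ F, muk k (⊥ : P) z = ∑ z ∈ F, ((-1 : ℝ)) ^ (ρ z) := by
      refine Finset.sum_congr rfl fun z hz => ?_
      rw [hE ⊥ z bot_le, hP.1, Nat.sub_zero]
    rw [hS] at hmu
    have hmaps : ∀ z ∈ F, ρ z ∈ Finset.Icc 1 n := by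
      intro z hz
      simp only [hF, Finset.mem_filter, Finset.mem_univ, true_and] at hz
      have h1 := hmono hz.1
      have h2 := hmono hz.2
      rw [hP.1] at h1
      rw [hP.2.1] at h2
      simp only [Finset.mem_Icc]
      omega
    have hfib := Finset.sum_fiberwise_of_maps_to hmaps (fun z => ((-1 : ℝ)) ^ (ρ z))
    have hfilt : ∀ i ∈ Finset.Icc 1 n,
        F.filter (fun z => ρ z = i) = Finset.univ.filter fun z : P => ρ z = i := by
      intro i hi
      simp only [Finset.mem_Icc] at hi
      ext z
      simp only [hF, Finset.mem_filter, Finset.mem_univ, true_and, and_imp]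
      constructor
      · exact fun h => h.2
      · intro h
        refine ⟨⟨?_, ?_⟩, h⟩
        · rw [bot_lt_iff_ne_bot]
          intro hzb
          rw [hzb, hP.1] at h
          omega
        · rw [lt_top_iff_ne_top]
          intro hzt
          rw [hzt, hP.2.1] at h
          omega
    have hsum2 : ∑ z ∈ F, ((-1 : ℝ)) ^ (ρ z)
        = ∑ i ∈ Finset.Icc 1 n, (-1 : ℝ) ^ i * (flagNum ρ {i} : ℝ) := by
      rw [← hfib]
      refine Finset.sum_congr rfl fun i hi => ?_
      rw [hfilt i hi, flagNum_singleton]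
      have : ∀ z ∈ (Finset.univ.filter fun z : P => ρ z = i),
          ((-1 : ℝ)) ^ (ρ z) = ((-1 : ℝ)) ^ i := by
        intro z hz
        rw [(Finset.mem_filter.mp hz).2]
      rw [Finset.sum_congr rfl this, Finset.sum_const, nsmul_eq_mul, mul_comm]
    rw [hsum2] at hmu
    have hk' : k ≠ 0 := ne_of_gt hk
    have key : ∑ i ∈ Finset.Icc 1 n, (-1 : ℝ) ^ i * (flagNum ρ {i} : ℝ)
        = k * ((-1 : ℝ) ^ n - 1) := by
      have hpow : ((-1 : ℝ)) ^ (n + 1) = -((-1 : ℝ)) ^ n := by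
        rw [pow_succ]; ring
      rw [hpow] at hmu
      field_simp at hmu
      linarith [hmu]
    have hsign : ∀ i ∈ Finset.Icc 1 n,
        (-1 : ℝ) ^ (i - 1) * (flagNum ρ {i} : ℝ)
          = -((-1 : ℝ) ^ i * (flagNum ρ {i} : ℝ)) := by
      intro i hi
      simp only [Finset.mem_Icc] at hi
      have hi1 : i = (i - 1) + 1 := by omega
      rw [hi1, pow_succ, ← hi1]
      ring
    rw [Finset.sum_congr rfl hsign, Finset.sum_neg_distrib, key]
    ring
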